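/- Let f(X) ∈ F_q[X], let A = {α_1, …, α_s} ⊆ F_q be a subset of size s and let c = (c_1, …, c_s) ∈ F_p^s. Then | |T(c, A, f)| − p^{r−s} | ≤ max over all (a_1, …, a_s) ∈ F_p^s with (a_1, …, a_s) ≠ (0, …, 0) of | Σ_{ξ ∈ F_q} ψ( δ · Σ_{i=1}^s a_i f(ξ + α_i) ) |. -/

import Mathlib

open Polynomial

/-- The Thue–Morse (sum-of-digits) function on `F` with respect to the ordered
basis `B` of `F` over `F_p`. -/
noncomputable def TM {p r : ℕ} {F : Type*} [Field F] [Algebra (ZMod p) F]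
    (B : Module.Basis (Fin r) (ZMod p) F) (ξ : F) : ZMod p :=
  ∑ i, B.repr ξ i

/-- The set `T(c, A, f)` where `A = {α 1, …, α s}` and `c = (c 1, …, c s)`. -/
noncomputable def TSet {p r s : ℕ} {F : Type*} [Field F] [Algebra (ZMod p) F]
    (B : Module.Basis (Fin r) (ZMod p) F) (c : Fin s → ZMod p) (α : Fin s → F)
    (f : Polynomial F) : Set F :=
  {ξ : F | ∀ i, TM B (f.eval (ξ + α i)) = c i}

/-- The additive canonical character `ψ(ξ) = e_p(Tr(ξ))` of `F`. -/
noncomputable def psi (p : ℕ) {F : Type*} [Field F] [Algebra (ZMod p) F] (ξ : F) : ℂ :=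
  Complex.exp (2 * Real.pi * Complex.I * ((Algebra.trace (ZMod p) F ξ).val : ℂ) / (p : ℂ))

/- ### Auxiliary lemmas -/

lemma addChar_map_sum {A M : Type*} [AddCommMonoid A] [CommMonoid M] (ψ : AddChar A M)
    {ι : Type*} (s : Finset ι) (g : ι → A) :
    ψ (∑ i ∈ s, g i) = ∏ i ∈ s, ψ (g i) := by
  induction s using Finset.cons_induction with
  | empty => simp
  | cons i s hi ih => simp [Finset.sum_cons, Finset.prod_cons, AddChar.map_add_eq_mul, ih]

lemma psi_eq {p : ℕ} [NeZero p] {F : Type*} [Field F] [Algebra (ZMod p) F] (ξ : F) :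
    psi p ξ = ZMod.stdAddChar (Algebra.trace (ZMod p) F ξ) := by
  rw [psi, ZMod.stdAddChar_apply, ZMod.toCircle_apply]

lemma sum_stdAddChar_mul {p : ℕ} [Fact p.Prime] (t : ZMod p) :
    ∑ a : ZMod p, ZMod.stdAddChar (a * t) = if t = 0 then (p : ℂ) else 0 := by
  haveI : NeZero p := ⟨(Fact.out : p.Prime).pos.ne'⟩
  split_ifs with h
  · simp [h, ZMod.card, Finset.card_univ]
  · have h1 : AddChar.mulShift (ZMod.stdAddChar (N := p)) t ≠ 1 :=
      ZMod.isPrimitive_stdAddChar p h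
    have h2 : ∑ a : ZMod p, AddChar.mulShift (ZMod.stdAddChar (N := p)) t a = 0 :=
      AddChar.sum_eq_zero_iff_ne_zero.2 (by rw [← AddChar.one_eq_zero]; exact h1)
    calc ∑ a : ZMod p, ZMod.stdAddChar (a * t)
        = ∑ a : ZMod p, AddChar.mulShift (ZMod.stdAddChar (N := p)) t a := by
          simp [AddChar.mulShift_apply, mul_comm]
      _ = 0 := h2

lemma sum_stdAddChar_pi {p : ℕ} [Fact p.Prime] {s : ℕ} (t : Fin s → ZMod p) :
    ∑ a : Fin s → ZMod p, ZMod.stdAddChar (∑ i, a i * t i) =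
      if t = 0 then (p : ℂ) ^ s else 0 := by
  haveI : NeZero p := ⟨(Fact.out : p.Prime).pos.ne'⟩
  have step1 : ∑ a : Fin s → ZMod p, ZMod.stdAddChar (∑ i, a i * t i)
      = ∑ a ∈ Fintype.piFinset (fun _ : Fin s => (Finset.univ : Finset (ZMod p))),
          ∏ i, ZMod.stdAddChar (a i * t i) := by
    rw [Fintype.piFinset_univ]
    exact Finset.sum_congr rfl fun a _ => addChar_map_sum _ _ _
  have hps := Finset.prod_univ_sum (fun _ : Fin s => (Finset.univ : Finset (ZMod p)))
    (fun i b => ZMod.stdAddChar (b * t i))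
  rw [step1, ← hps]
  have step2 : ∀ i : Fin s, ∑ b : ZMod p, ZMod.stdAddChar (b * t i)
      = if t i = 0 then (p : ℂ) else 0 := fun i => sum_stdAddChar_mul (t i)
  rw [Finset.prod_congr rfl fun i _ => step2 i]
  by_cases h : t = 0
  · simp [h]
  · obtain ⟨i, hi⟩ : ∃ i, t i ≠ 0 := by
      by_contra hc
      push_neg at hc
      exact h (funext hc)
    rw [if_neg h]
    exact Finset.prod_eq_zero (Finset.mem_univ i) (by simp [hi])

theorem stmt11 {p r : ℕ} [Fact p.Prime] (hr : 0 < r)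
    {F : Type*} [Field F] [Fintype F] [Algebra (ZMod p) F]
    (hF : Fintype.card F = p ^ r) (B : Module.Basis (Fin r) (ZMod p) F)
    (δ : Fin r → F)
    (hdual : ∀ i j, Algebra.trace (ZMod p) F (δ i * B j) = if i = j then 1 else 0)
    (f : Polynomial F) (s : ℕ) (hs1 : 1 ≤ s) (hs2 : s ≤ p ^ r)
    (α : Fin s → F) (hα : Function.Injective α) (c : Fin s → ZMod p) :
    |(Set.ncard (TSet B c α f) : ℝ) - (p : ℝ) ^ ((r : ℤ) - (s : ℤ))| ≤
      ⨆ a : {a : Fin s → ZMod p // a ≠ 0},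
        ‖(∑ ξ : F,
          psi p ((∑ i, δ i) * ∑ i, (a.1 i) • f.eval (ξ + α i)))‖ := by
  classical
  haveI : NeZero p := ⟨(Fact.out : p.Prime).pos.ne'⟩
  have hp2 : 2 ≤ p := (Fact.out : p.Prime).two_le
  set Tr := Algebra.trace (ZMod p) F with hTrdef
  set e := ZMod.stdAddChar (N := p) with hedef
  set δ' := ∑ i, δ i with hδ'
  -- `TM B x = Tr (δ' * x)`
  have hTrrepr : ∀ (i : Fin r) (x : F), Tr (δ i * x) = B.repr x i := by
    intro i x
    conv_lhs => rw [← B.sum_repr x]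
    rw [Finset.mul_sum, map_sum]
    have : ∀ j : Fin r, Tr (δ i * B.repr x j • B j) = B.repr x j * (if i = j then 1 else 0) := by
      intro j
      rw [mul_smul_comm, map_smul, smul_eq_mul, hdual i j]
    rw [Finset.sum_congr rfl fun j _ => this j]
    simp
  have hTM : ∀ x : F, TM B x = Tr (δ' * x) := by
    intro x
    rw [TM, hδ', Finset.sum_mul, map_sum]
    exact (Finset.sum_congr rfl fun i _ => (hTrrepr i x).symm)
  -- the counting set as a Finset
  set g : F → Fin s → ZMod p := fun ξ i => TM B (f.eval (ξ + α i)) with hg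
  set S : Finset F := Finset.univ.filter (fun ξ => ∀ i, g ξ i = c i) with hS
  have hset : TSet B c α f = (S : Set F) := by
    ext ξ
    simp [TSet, hS, hg]
  have hncard : (Set.ncard (TSet B c α f) : ℝ) = (S.card : ℝ) := by
    rw [hset, Set.ncard_coe_finset]
  -- the exponential sums
  set Sa : (Fin s → ZMod p) → ℂ :=
    fun a => ∑ ξ : F, psi p (δ' * ∑ i, (a i) • f.eval (ξ + α i)) with hSa
  -- pointwise identity
  have hpoint : ∀ (a : Fin s → ZMod p) (ξ : F),
      e (-∑ i, a i * c i) * psi p (δ' * ∑ i, (a i) • f.eval (ξ + α i))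
        = e (∑ i, a i * (g ξ i - c i)) := by
    intro a ξ
    have h1 : Tr (δ' * ∑ i, (a i) • f.eval (ξ + α i)) = ∑ i, a i * g ξ i := by
      rw [Finset.mul_sum, map_sum]
      refine Finset.sum_congr rfl fun i _ => ?_
      rw [mul_smul_comm, map_smul, smul_eq_mul, ← hTM]
    rw [psi_eq, ← hTrdef, ← hedef, h1, ← AddChar.map_add_eq_mul]
    congr 1
    simp only [mul_sub, Finset.sum_sub_distrib]
    ring
  -- the key identity
  have key : ∑ a : Fin s → ZMod p, (e (-∑ i, a i * c i) * Sa a)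
      = (p : ℂ) ^ s * S.card := by
    calc ∑ a : Fin s → ZMod p, (e (-∑ i, a i * c i) * Sa a)
        = ∑ a : Fin s → ZMod p, ∑ ξ : F, e (∑ i, a i * (g ξ i - c i)) := by
          refine Finset.sum_congr rfl fun a _ => ?_
          rw [hSa, Finset.mul_sum]
          exact Finset.sum_congr rfl fun ξ _ => hpoint a ξ
      _ = ∑ ξ : F, ∑ a : Fin s → ZMod p, e (∑ i, a i * (g ξ i - c i)) :=
          Finset.sum_comm
      _ = ∑ ξ : F, (if (fun i => g ξ i - c i) = 0 then (p : ℂ) ^ s else 0) :=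
          Finset.sum_congr rfl fun ξ _ => sum_stdAddChar_pi _
      _ = ∑ ξ : F, (if ξ ∈ S then (p : ℂ) ^ s else 0) := by
          refine Finset.sum_congr rfl fun ξ _ => ?_
          congr 1
          simp only [hS, Finset.mem_filter, Finset.mem_univ, true_and, funext_iff,
            Pi.zero_apply, sub_eq_zero]
      _ = (p : ℂ) ^ s * S.card := by
          rw [Finset.sum_ite_mem, Finset.univ_inter, Finset.sum_const]
          simp [mul_comm]
  -- the term `a = 0`
  have hzero : e (-∑ i, (0 : Fin s → ZMod p) i * c i) * Sa 0 = (p : ℂ) ^ r := by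
    have h0 : Sa 0 = (p : ℂ) ^ r := by
      simp only [hSa]
      have : ∀ ξ : F, psi p (δ' * ∑ i, ((0 : Fin s → ZMod p) i) • f.eval (ξ + α i)) = 1 := by
        intro ξ
        simp [psi_eq, ← hedef]
      rw [Finset.sum_congr rfl fun ξ _ => this ξ]
      simp [hF]
    simp [h0]
  -- splitting off `a = 0`
  have hsplit : ∑ a ∈ (Finset.univ : Finset (Fin s → ZMod p)).erase 0,
      (e (-∑ i, a i * c i) * Sa a) = (p : ℂ) ^ s * S.card - (p : ℂ) ^ r := by
    rw [Finset.sum_erase_eq_sub (Finset.mem_univ 0), key, hzero]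
  -- the supremum
  set M := ⨆ a : {a : Fin s → ZMod p // a ≠ 0},
      ‖(∑ ξ : F, psi p (δ' * ∑ i, (a.1 i) • f.eval (ξ + α i)))‖ with hMdef
  have hbdd : BddAbove (Set.range fun a : {a : Fin s → ZMod p // a ≠ 0} =>
      ‖(∑ ξ : F, psi p (δ' * ∑ i, (a.1 i) • f.eval (ξ + α i)))‖) :=
    Set.Finite.bddAbove (Set.finite_range _)
  have hMle : ∀ a : Fin s → ZMod p, a ≠ 0 → ‖Sa a‖ ≤ M := by
    intro a ha
    exact le_ciSup hbdd ⟨a, ha⟩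
  have ha₀ : (fun _ : Fin s => (1 : ZMod p)) ≠ 0 := by
    intro hcon
    have := congrFun hcon ⟨0, hs1⟩
    simp at this
  have hM0 : 0 ≤ M := le_trans (norm_nonneg _) (hMle _ ha₀)
  -- the main bound
  have hcard : ((Finset.univ : Finset (Fin s → ZMod p)).erase 0).card ≤ p ^ s := by
    calc ((Finset.univ : Finset (Fin s → ZMod p)).erase 0).card
        ≤ (Finset.univ : Finset (Fin s → ZMod p)).card := Finset.card_erase_le
      _ = p ^ s := by simp [Finset.card_univ, ZMod.card]
  have habs : ‖(p : ℂ) ^ s * S.card - (p : ℂ) ^ r‖ ≤ (p : ℝ) ^ s * M := by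
    rw [← hsplit]
    calc ‖∑ a ∈ (Finset.univ : Finset (Fin s → ZMod p)).erase 0,
          (e (-∑ i, a i * c i) * Sa a)‖
        ≤ ∑ a ∈ (Finset.univ : Finset (Fin s → ZMod p)).erase 0,
            ‖e (-∑ i, a i * c i) * Sa a‖ := norm_sum_le _ _
      _ ≤ ∑ a ∈ (Finset.univ : Finset (Fin s → ZMod p)).erase 0, M := by
          refine Finset.sum_le_sum fun a haa => ?_
          rw [norm_mul]
          have he1 : ‖e (-∑ i, a i * c i)‖ = 1 := by
            rw [hedef, ZMod.stdAddChar_apply]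
            exact Circle.norm_coe _
          rw [he1, one_mul]
          exact hMle a (Finset.ne_of_mem_erase haa)
      _ = ((Finset.univ : Finset (Fin s → ZMod p)).erase 0).card • M := by
          rw [Finset.sum_const]
      _ ≤ (p ^ s : ℕ) • M := by
          exact nsmul_le_nsmul_left hM0 hcard
      _ = (p : ℝ) ^ s * M := by
          rw [nsmul_eq_mul]; push_cast; ring
  -- conclusion
  have hps : (0 : ℝ) < (p : ℝ) ^ s := by positivity
  have hzpow : (p : ℝ) ^ ((r : ℤ) - (s : ℤ)) = (p : ℝ) ^ r / (p : ℝ) ^ s := by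
    rw [zpow_sub₀ (by positivity : (p : ℝ) ≠ 0)]
    norm_cast
  have hre : |(S.card : ℝ) - (p : ℝ) ^ r / (p : ℝ) ^ s|
      = ‖(p : ℂ) ^ s * S.card - (p : ℂ) ^ r‖ / (p : ℝ) ^ s := by
    rw [eq_div_iff hps.ne']
    have h1 : ‖(p : ℂ) ^ s * S.card - (p : ℂ) ^ r‖
        = |(p : ℝ) ^ s * (S.card : ℝ) - (p : ℝ) ^ r| := by
      have : ((p : ℂ) ^ s * S.card - (p : ℂ) ^ r)
          = (((p : ℝ) ^ s * (S.card : ℝ) - (p : ℝ) ^ r : ℝ) : ℂ) := by push_cast; ring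
      rw [this, Complex.norm_real, Real.norm_eq_abs]
    rw [h1, ← abs_of_pos hps, ← abs_mul]
    congr 1
    field_simp
    rw [abs_of_pos hps]
  rw [hncard, hzpow, hre, div_le_iff₀ hps]
  calc ‖(p : ℂ) ^ s * S.card - (p : ℂ) ^ r‖ ≤ (p : ℝ) ^ s * M := habs
    _ = M * (p : ℝ) ^ s := by ring
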